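/- Let u < v and k, r positive integers, and let g be smooth on a neighborhood of [u, v] with M(u,v) = (g(v)-g(u))/(v-u). Then the case k = r of the weighted-average identity holds: for g(x) = x^{2k}/(2k)!, C(2k-2, k-1) · _{k-1}M_{k-1}(u,v) = (1/(2k-1)) · (u + v)/2, i.e., the regression identity E[R | endpoints] = (u+v)/2 specializes the formula (ru+kv)/(k+r) at r = k. -/

import Mathlib

open Filter Set Topology

/-- Mixed partial derivative `∂^{i+j} M / ∂u^i ∂v^j` of `M(u,v) = (g v - g u)/(v-u)`. -/
noncomputable def Mmix (g : ℝ → ℝ) (i j : ℕ) (u v : ℝ) : ℝ :=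
  iteratedDeriv i (fun u' => iteratedDeriv j (fun v' => (g v' - g u') / (v' - u')) v) u

/-- Iterated derivative of a polynomial given as a sum of monomials. -/
lemma itder_poly (c : ℕ → ℝ) (p : ℕ → ℕ) (N : ℕ) (j : ℕ) :
    iteratedDeriv j (fun x : ℝ => ∑ i ∈ Finset.range N, c i * x ^ p i) =
      fun x => ∑ i ∈ Finset.range N, c i * ((p i).descFactorial j : ℝ) * x ^ (p i - j) := by
  induction j with
  | zero => simp
  | succ j ih =>
    rw [iteratedDeriv_succ, ih]
    funext x
    rw [deriv_fun_sum (fun i _ => ((differentiableAt_pow _).const_mul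
      (c i * ((p i).descFactorial j : ℝ))))]
    refine Finset.sum_congr rfl fun i _ => ?_
    rw [deriv_const_mul_field, deriv_pow_field]
    rw [Nat.descFactorial_succ, Nat.sub_sub]
    push_cast
    ring

lemma aux_desc (m : ℕ) : (m + 1).descFactorial m = (m + 1).factorial := by
  have h := Nat.descFactorial_succ (m + 1) m
  rw [Nat.descFactorial_self, show m + 1 - m = 1 from by omega, one_mul] at h
  omega

lemma aux_mix (m : ℕ) (u v : ℝ) (huv : u < v) :
    iteratedDeriv m (fun u' => iteratedDeriv m
        (fun v' : ℝ => (v' ^ (2 * m + 2) / (((2 * m + 2).factorial : ℕ) : ℝ)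
          - u' ^ (2 * m + 2) / (((2 * m + 2).factorial : ℕ) : ℝ)) / (v' - u')) v) u
      = (m.factorial : ℝ) * ((m + 1).factorial : ℝ) * (u + v) / ((2 * m + 2).factorial : ℝ) := by
  set n := 2 * m + 2 with hn
  clear_value n
  have hfac : ((n.factorial : ℕ) : ℝ) ≠ 0 := Nat.cast_ne_zero.mpr n.factorial_ne_zero
  have hinner : ∀ u' : ℝ, u' ≠ v →
      iteratedDeriv m (fun v' : ℝ => (v' ^ n / (n.factorial : ℝ) - u' ^ n / (n.factorial : ℝ))
          / (v' - u')) v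
        = ∑ i ∈ Finset.range n,
            u' ^ (n - 1 - i) / (n.factorial : ℝ) * (i.descFactorial m : ℝ) * v ^ (i - m) := by
    intro u' hu'
    have hev : (fun v' : ℝ => (v' ^ n / (n.factorial : ℝ) - u' ^ n / (n.factorial : ℝ))
          / (v' - u'))
        =ᶠ[𝓝 v] (fun v' => ∑ i ∈ Finset.range n,
            u' ^ (n - 1 - i) / (n.factorial : ℝ) * v' ^ i) := by
      filter_upwards [isOpen_ne.mem_nhds (Ne.symm hu')] with z hz
      have hz' : z - u' ≠ 0 := sub_ne_zero.mpr hz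
      have key : (∑ i ∈ Finset.range n, u' ^ (n - 1 - i) * z ^ i) * (z - u')
          = z ^ n - u' ^ n := by
        rw [← geom_sum₂_mul z u' n]
        congr 1
        exact Finset.sum_congr rfl fun i _ => mul_comm _ _
      have key2 : ∑ i ∈ Finset.range n, u' ^ (n - 1 - i) / (n.factorial : ℝ) * z ^ i
          = (∑ i ∈ Finset.range n, u' ^ (n - 1 - i) * z ^ i) / (n.factorial : ℝ) := by
        rw [Finset.sum_div]
        exact Finset.sum_congr rfl fun i _ => by ring
      rw [key2, div_eq_iff hz']
      linear_combination -key / (n.factorial : ℝ)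
    rw [hev.iteratedDeriv_eq m]
    exact congrFun (itder_poly (fun i => u' ^ (n - 1 - i) / (n.factorial : ℝ))
      (fun i => i) n m) v
  have houter : (fun u' : ℝ => iteratedDeriv m
        (fun v' : ℝ => (v' ^ n / (n.factorial : ℝ) - u' ^ n / (n.factorial : ℝ))
          / (v' - u')) v)
      =ᶠ[𝓝 u] (fun u' => ∑ i ∈ Finset.range n,
          (i.descFactorial m : ℝ) * v ^ (i - m) / (n.factorial : ℝ) * u' ^ (n - 1 - i)) := by
    filter_upwards [isOpen_ne.mem_nhds huv.ne] with w hw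
    rw [hinner w hw]
    exact Finset.sum_congr rfl fun i _ => by ring
  rw [houter.iteratedDeriv_eq m]
  refine Eq.trans (congrFun (itder_poly
    (fun i => (i.descFactorial m : ℝ) * v ^ (i - m) / (n.factorial : ℝ))
    (fun i => n - 1 - i) n m) u) ?_
  have hsub : ({m, m + 1} : Finset ℕ) ⊆ Finset.range n := by
    intro x hx
    simp only [Finset.mem_insert, Finset.mem_singleton] at hx
    simp only [Finset.mem_range]
    omega
  rw [← Finset.sum_subset hsub (by
    intro x hxr hxs
    simp only [Finset.mem_insert, Finset.mem_singleton, not_or] at hxs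
    simp only [Finset.mem_range] at hxr
    rcases lt_or_ge x m with h | h
    · rw [Nat.descFactorial_eq_zero_iff_lt.mpr h]
      simp
    · have hlt : n - 1 - x < m := by omega
      rw [Nat.descFactorial_eq_zero_iff_lt.mpr hlt]
      simp)]
  rw [Finset.sum_insert (by simp), Finset.sum_singleton]
  have e1 : n - 1 - m = m + 1 := by omega
  have e2 : n - 1 - (m + 1) = m := by omega
  have e3 : m + 1 - m = 1 := by omega
  have e4 : m - m = 0 := by omega
  rw [e1, e2, e3, e4, Nat.descFactorial_self, aux_desc]
  ring

/-- for `g(x) = x^{2k}/(2k)!`, the `k = r` case of the weighted-average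
identity: `C(2k-2, k-1) · _{k-1}M_{k-1}(u,v) = (1/(2k-1)) · (u+v)/2`. -/
theorem stmt17 (k : ℕ) (hk : 1 ≤ k) (u v : ℝ) (huv : u < v) :
    ((2 * k - 2).choose (k - 1) : ℝ) *
        Mmix (fun x => x ^ (2 * k) / ((2 * k).factorial : ℝ)) (k - 1) (k - 1) u v =
      (1 / (2 * (k : ℝ) - 1)) * ((u + v) / 2) := by
  obtain ⟨m, rfl⟩ : ∃ m, k = m + 1 := ⟨k - 1, by omega⟩
  have h2 : 2 * (m + 1) = 2 * m + 2 := by omega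
  have h3 : 2 * (m + 1) - 2 = 2 * m := by omega
  unfold Mmix
  simp only [Nat.add_sub_cancel, h2, h3]
  rw [aux_mix m u v huv]
  have hc : ((2 * m).choose m : ℝ) * (m.factorial : ℝ) * (m.factorial : ℝ)
      = ((2 * m).factorial : ℝ) := by
    have h := Nat.choose_mul_factorial_mul_factorial (show m ≤ 2 * m by omega)
    rw [show 2 * m - m = m from by omega] at h
    exact_mod_cast congrArg (Nat.cast (R := ℝ)) h
  have hf2 : ((2 * m + 2).factorial : ℝ)
      = (2 * m + 2) * ((2 * m + 1) * ((2 * m).factorial : ℝ)) := by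
    rw [show (2 * m + 2 = (2 * m + 1) + 1) from rfl, Nat.factorial_succ,
      show (2 * m + 1 = (2 * m) + 1) from rfl, Nat.factorial_succ]
    push_cast
    ring
  have hf1 : (((m + 1).factorial : ℕ) : ℝ) = (m + 1) * (m.factorial : ℝ) := by
    rw [Nat.factorial_succ]; push_cast; ring
  have hm0 : (m.factorial : ℝ) ≠ 0 := Nat.cast_ne_zero.mpr m.factorial_ne_zero
  have h2m0 : ((2 * m).factorial : ℝ) ≠ 0 := Nat.cast_ne_zero.mpr (2 * m).factorial_ne_zero
  have hne1 : (2 * (m : ℝ) + 1) ≠ 0 := by positivity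
  have hne2 : (2 * (m : ℝ) + 2) ≠ 0 := by positivity
  have hcast : 2 * ((m : ℝ) + 1) - 1 = 2 * (m : ℝ) + 1 := by ring
  have hC0 : ((2 * m).choose m : ℝ) ≠ 0 :=
    Nat.cast_ne_zero.mpr (Nat.choose_pos (show m ≤ 2 * m by omega)).ne'
  push_cast [hf2, hf1]
  rw [hcast, ← hc]
  field_simp
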